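/- Let q be a prime power with q ≡ 1 (mod 3), and let π(x) = ax + r and σ(x) = bx + s be elements of AGL(1,q) (a, b ≠ 0) that are adjacent in the contraction graph (i.e., hd(π^△, σ^△) = hd(π, σ) − 3 = q − 4). Then a/b and b/a are the two distinct roots of t² + t + 1 = 0 in GF(q). -/

import Mathlib

noncomputable def hd {Ω : Type*} (π σ : Equiv.Perm Ω) : ℕ :=
  Set.ncard {x | π x ≠ σ x}

open scoped Classical in
noncomputable def ctr {Ω : Type*} (F : Ω) (π : Equiv.Perm Ω) : Equiv.Perm Ω :=
  π.trans (Equiv.swap F (π F))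

theorem stmt5 {K : Type*} [Field K] [Fintype K] (q : ℕ) (hq : Fintype.card K = q)
    (hq3 : q % 3 = 1) (F : K) (π σ : Equiv.Perm K) (a b r s : K)
    (ha : a ≠ 0) (hb : b ≠ 0)
    (hπ : ∀ x, π x = a * x + r) (hσ : ∀ x, σ x = b * x + s)
    (hadj1 : (hd (ctr F π) (ctr F σ) : ℤ) = (hd π σ : ℤ) - 3)
    (hadj2 : (hd (ctr F π) (ctr F σ) : ℤ) = (q : ℤ) - 4) :
    a / b ≠ b / a ∧ (a / b) ^ 2 + a / b + 1 = 0 ∧ (b / a) ^ 2 + b / a + 1 = 0 := by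
  classical
  have hπp1 : π (π.symm F) = F := π.apply_symm_apply F
  have hσs1 : σ (σ.symm F) = F := σ.apply_symm_apply F
  set p1 := π.symm F with hp1def
  set s1 := σ.symm F with hs1def
  set D : Set K := {x | π x ≠ σ x} with hDdef
  set D' : Set K := {x | ctr F π x ≠ ctr F σ x} with hD'def
  have hdD : hd π σ = D.ncard := rfl
  have hdD' : hd (ctr F π) (ctr F σ) = D'.ncard := rfl
  rw [hdD, hdD'] at hadj1
  rw [hdD'] at hadj2
  have hq4 : 4 ≤ q := by omega
  have hDn : D.ncard = q - 1 := by omega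
  have hD'n : D'.ncard = q - 4 := by omega
  set S : Set K := {F, p1, s1} with hSdef
  have pair_le : ∀ u v : K, ({u, v} : Set K).ncard ≤ 2 := by
    intro u v
    refine le_trans (Set.ncard_insert_le _ _) ?_
    simp [Set.ncard_singleton]
  have hS3 : S.ncard ≤ 3 := by
    refine le_trans (Set.ncard_insert_le _ _) ?_
    have := pair_le p1 s1
    omega
  have hsub : D ⊆ D' ∪ S := by
    intro x hx
    by_cases hxS : x ∈ S
    · exact Or.inr hxS
    · left
      simp only [hSdef, Set.mem_insert_iff, Set.mem_singleton_iff, not_or] at hxS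
      obtain ⟨hxF, hxp1, hxs1⟩ := hxS
      have h1 : ctr F π x = π x := by
        show Equiv.swap F (π F) (π x) = π x
        apply Equiv.swap_apply_of_ne_of_ne
        · intro h
          exact hxp1 (by rw [hp1def, ← h, Equiv.symm_apply_apply])
        · intro h
          exact hxF (π.injective h)
      have h2 : ctr F σ x = σ x := by
        show Equiv.swap F (σ F) (σ x) = σ x
        apply Equiv.swap_apply_of_ne_of_ne
        · intro h
          exact hxs1 (by rw [hs1def, ← h, Equiv.symm_apply_apply])
        · intro h
          exact hxF (σ.injective h)
      have hx' : π x ≠ σ x := hx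
      simp only [hD'def, Set.mem_setOf_eq, h1, h2]
      exact hx'
  have hunion := Set.ncard_union_add_ncard_inter D' S
  have hDle : D.ncard ≤ (D' ∪ S).ncard := Set.ncard_le_ncard hsub (Set.toFinite _)
  have hint0 : (D' ∩ S).ncard = 0 := by omega
  have hS3' : S.ncard = 3 := by omega
  have hinter : D' ∩ S = ∅ := (Set.ncard_eq_zero (Set.toFinite _)).mp hint0
  have hFp1 : F ≠ p1 := by
    intro h
    have : S.ncard ≤ 2 := by rw [hSdef, h, Set.insert_idem]; exact pair_le _ _
    omega
  have hFs1 : F ≠ s1 := by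
    intro h
    have : S.ncard ≤ 2 := by
      rw [hSdef, h, Set.insert_comm, Set.pair_eq_singleton]; exact pair_le _ _
    omega
  have hp1s1 : p1 ≠ s1 := by
    intro h
    have : S.ncard ≤ 2 := by
      rw [hSdef, h, Set.pair_eq_singleton]; exact pair_le _ _
    omega
  have hπFF : π F ≠ F := by
    intro h
    exact hFp1 (((Equiv.symm_apply_eq π).mpr h.symm).symm)
  have hσFF : σ F ≠ F := by
    intro h
    exact hFs1 (((Equiv.symm_apply_eq σ).mpr h.symm).symm)
  have hp1S : p1 ∈ S := by simp [hSdef]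
  have hs1S : s1 ∈ S := by simp [hSdef]
  have hp1notD' : p1 ∉ D' := fun h => (Set.eq_empty_iff_forall_notMem.mp hinter p1) ⟨h, hp1S⟩
  have hs1notD' : s1 ∉ D' := fun h => (Set.eq_empty_iff_forall_notMem.mp hinter s1) ⟨h, hs1S⟩
  have heqp1 : ctr F π p1 = ctr F σ p1 := by
    by_contra h
    exact hp1notD' h
  have heqs1 : ctr F π s1 = ctr F σ s1 := by
    by_contra h
    exact hs1notD' h
  have e1 : σ p1 = π F := by
    have hl : ctr F π p1 = π F := by
      show Equiv.swap F (π F) (π p1) = π F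
      rw [hπp1, Equiv.swap_apply_left]
    have hne1 : σ p1 ≠ F := by
      intro h
      exact hp1s1 (σ.injective (h.trans hσs1.symm))
    have hne2 : σ p1 ≠ σ F := by
      intro h
      exact hFp1 (σ.injective h).symm
    have hr : ctr F σ p1 = σ p1 := by
      show Equiv.swap F (σ F) (σ p1) = σ p1
      exact Equiv.swap_apply_of_ne_of_ne hne1 hne2
    have := heqp1
    rw [hl, hr] at this
    exact this.symm
  have e2 : π s1 = σ F := by
    have hl : ctr F σ s1 = σ F := by
      show Equiv.swap F (σ F) (σ s1) = σ F
      rw [hσs1, Equiv.swap_apply_left]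
    have hne1 : π s1 ≠ F := by
      intro h
      exact hp1s1 (π.injective (hπp1.trans h.symm))
    have hne2 : π s1 ≠ π F := by
      intro h
      exact hFs1 (π.injective h).symm
    have hr : ctr F π s1 = π s1 := by
      show Equiv.swap F (π F) (π s1) = π s1
      exact Equiv.swap_apply_of_ne_of_ne hne1 hne2
    have := heqs1
    rw [hl, hr] at this
    exact this
  have hπp1' : a * p1 + r = F := by rw [← hπ p1]; exact hπp1
  have hσs1' : b * s1 + s = F := by rw [← hσ s1]; exact hσs1
  have e1' : b * p1 + s = a * F + r := by rw [← hσ p1, ← hπ F]; exact e1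
  have e2' : a * s1 + r = b * F + s := by rw [← hπ s1, ← hσ F]; exact e2
  have hne : a * F + r ≠ b * F + s := by
    intro h
    have hbp : b * p1 = b * F := by linear_combination e1' + h
    have hp1F : p1 = F := mul_left_cancel₀ hb hbp
    exact hπFF (hp1F ▸ hπp1)
  have hkey : (a^2 + a*b + b^2) * ((a*F + r) - (b*F + s)) = 0 := by
    linear_combination (-(a^2)) * e1' + (a*b) * hπp1' + (b^2) * e2' - (a*b) * hσs1'
  have hΔ : a^2 + a*b + b^2 = 0 := by
    rcases mul_eq_zero.mp hkey with h | h
    · exact h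
    · exact absurd (sub_eq_zero.mp h) hne
  have h3 : (3:K) ≠ 0 := by
    intro h
    have h' : ((3:ℕ) : K) = 0 := by exact_mod_cast h
    have hdvd : ringChar K ∣ 3 := ringChar.dvd h'
    have hne1 : ringChar K ≠ 1 := CharP.ringChar_ne_one
    have hchar3 : ringChar K = 3 := by
      rcases (Nat.Prime.eq_one_or_self_of_dvd (by norm_num) _ hdvd) with h1 | h1
      · exact absurd h1 hne1
      · exact h1
    haveI := ringChar.charP K
    obtain ⟨n, -, hcard⟩ := FiniteField.card K (ringChar K)
    rw [hchar3, hq] at hcard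
    have hdvd3 : (3:ℕ) ∣ q := by
      rw [hcard]
      exact dvd_pow_self 3 n.pos.ne'
    omega
  have hroot1 : (a/b)^2 + a/b + 1 = 0 := by
    field_simp
    linear_combination hΔ
  have hroot2 : (b/a)^2 + b/a + 1 = 0 := by
    field_simp
    linear_combination hΔ
  refine ⟨?_, hroot1, hroot2⟩
  intro heq
  have ht2 : (a/b) * (b/a) = 1 := by field_simp
  have h1 : (a/b)^2 = 1 := by
    rw [sq]
    nth_rewrite 2 [heq]
    exact ht2
  have h2 : a/b = -2 := by linear_combination hroot1 - h1
  exact h3 (by linear_combination h1 - (a/b - 2) * h2)
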